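/- Let G be a connected graph, T a subtree of G of maximum order among trees whose stem has exactly k branch vertices, and suppose T is not spanning. Then for every vertex v ∈ V(G) \ V(T), every neighbor of v in G lies in Leaf(T) ∪ (V(G) \ V(T)). -/

import Mathlib

open SimpleGraph

/-- Degree of a vertex in a subgraph. -/
noncomputable def sdeg {V : Type*} {G : SimpleGraph V} (T : G.Subgraph) (v : V) : ℕ :=
  (T.neighborSet v).ncard

/-- The leaves of a subgraph (thought of as a tree): vertices of degree one. -/
def sleaf {V : Type*} {G : SimpleGraph V} (T : G.Subgraph) : Set V :=
  {v | v ∈ T.verts ∧ sdeg T v = 1}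

/-- Degree of a vertex in the stem `T - Leaf(T)`. -/
noncomputable def sstemDeg {V : Type*} {G : SimpleGraph V} (T : G.Subgraph) (w : V) : ℕ :=
  {x | T.Adj w x ∧ w ∉ sleaf T ∧ x ∉ sleaf T}.ncard

/-- Branch vertices of the stem of `T`: stem vertices of stem-degree at least 3. -/
def sbranch {V : Type*} {G : SimpleGraph V} (T : G.Subgraph) : Set V :=
  {w | 3 ≤ sstemDeg T w}

section Aux

variable {V : Type*}

private lemma not_reach {A : SimpleGraph V} {v x : V} (hv : ∀ z, ¬ A.Adj v z) (hx : x ≠ v) :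
    ¬ A.Reachable x v := by
  intro h
  obtain ⟨q⟩ := h.symm
  cases q with
  | nil => exact hx rfl
  | cons h _ => exact hv _ h

private lemma collapse_reach [DecidableEq V] {A B : SimpleGraph V} {u v : V} (huv : u ≠ v)
    (hv : ∀ x, ¬ A.Adj v x)
    (hB : ∀ a b, B.Adj a b ↔ A.Adj a b ∨ (a = u ∧ b = v) ∨ (a = v ∧ b = u))
    (F : SimpleGraph V) :
    ∀ {a b : V}, (B \ F).Walk a b →
      (A \ F).Reachable (if a = v then u else a) (if b = v then u else b) := by
  intro a b p
  induction p with
  | nil => exact Reachable.refl _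
  | @cons a c b h p ih =>
    rw [sdiff_adj] at h
    rcases (hB a c).mp h.1 with hA | ⟨rfl, rfl⟩ | ⟨rfl, rfl⟩
    · have ha : a ≠ v := fun e => hv c (e ▸ hA)
      have hc : c ≠ v := fun e => hv a (e ▸ hA.symm)
      rw [if_neg ha]
      rw [if_neg hc] at ih
      exact (Adj.reachable ((sdiff_adj A F a c).mpr ⟨hA, h.2⟩)).trans ih
    · rw [if_neg huv]
      rwa [if_pos rfl] at ih
    · rw [if_pos rfl]
      rwa [if_neg huv] at ih

private lemma pendant_bridge_case [DecidableEq V] {A B : SimpleGraph V} {u v x y : V}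
    (huv : u ≠ v) (hv : ∀ z, ¬ A.Adj v z)
    (hB : ∀ a b, B.Adj a b ↔ A.Adj a b ∨ (a = u ∧ b = v) ∨ (a = v ∧ b = u))
    (hs : s(x, y) = s(u, v)) (p : (B \ fromEdgeSet {s(x, y)}).Walk x y) : False := by
  have hle : B \ fromEdgeSet {s(x, y)} ≤ A := by
    intro a b hab
    rw [sdiff_adj, fromEdgeSet_adj] at hab
    rcases (hB a b).mp hab.1 with h | ⟨ha, hb⟩ | ⟨ha, hb⟩
    · exact h
    · refine absurd ⟨Set.mem_singleton_iff.mpr ?_, ?_⟩ hab.2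
      · rw [ha, hb]; exact hs.symm
      · rw [ha, hb]; exact huv
    · refine absurd ⟨Set.mem_singleton_iff.mpr ?_, ?_⟩ hab.2
      · rw [ha, hb, Sym2.eq_swap]; exact hs.symm
      · rw [ha, hb]; exact fun e => huv e.symm
  have hreach : A.Reachable x y := Reachable.mono hle ⟨p⟩
  rcases Sym2.eq_iff.mp hs with ⟨h1, h2⟩ | ⟨h1, h2⟩
  · subst h1; subst h2
    exact not_reach hv huv hreach
  · subst h1; subst h2
    exact not_reach hv huv hreach.symm

private lemma pendant_isAcyclic [DecidableEq V] {A B : SimpleGraph V} {u v : V}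
    (hA : A.IsAcyclic) (huv : u ≠ v) (hv : ∀ x, ¬ A.Adj v x)
    (hB : ∀ a b, B.Adj a b ↔ A.Adj a b ∨ (a = u ∧ b = v) ∨ (a = v ∧ b = u)) :
    B.IsAcyclic := by
  rw [isAcyclic_iff_forall_adj_isBridge]
  intro x y hxy
  rw [isBridge_iff]
  refine fun hr => ?_
  obtain ⟨p⟩ := hr
  rcases (hB x y).mp hxy with hAxy | ⟨h1, h2⟩ | ⟨h1, h2⟩
  · have hx : x ≠ v := fun e => hv y (e ▸ hAxy)
    have hy : y ≠ v := fun e => hv x (e ▸ hAxy.symm)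
    have hb := isAcyclic_iff_forall_adj_isBridge.mp hA hAxy
    rw [isBridge_iff] at hb
    apply hb
    have := collapse_reach huv hv hB (fromEdgeSet {s(x, y)}) p
    rwa [if_neg hx, if_neg hy] at this
  · exact pendant_bridge_case huv hv hB (by rw [h1, h2]) p
  · exact pendant_bridge_case huv hv hB (by rw [h1, h2]; exact Sym2.eq_swap) p

private lemma coe_reach_of_spanning {G : SimpleGraph V} (T : G.Subgraph) {x y : V}
    (hx : x ∈ T.verts) (hy : y ∈ T.verts) :
    ∀ {a b : V}, (T.spanningCoe \ fromEdgeSet {s(x, y)}).Walk a b →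
      ∀ (ha : a ∈ T.verts) (hb : b ∈ T.verts),
      (T.coe \ fromEdgeSet {s((⟨x, hx⟩ : T.verts), (⟨y, hy⟩ : T.verts))}).Reachable
        ⟨a, ha⟩ ⟨b, hb⟩ := by
  intro a b p
  induction p with
  | nil => intro ha hb; exact Reachable.refl _
  | @cons a c b h p ih =>
    intro ha hb
    rw [sdiff_adj] at h
    have hTac : T.Adj a c := h.1
    have hc : c ∈ T.verts := T.edge_vert hTac.symm
    refine (Adj.reachable ?_).trans (ih hc hb)
    rw [sdiff_adj]
    refine ⟨hTac, fun hcon => ?_⟩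
    apply h.2
    rw [fromEdgeSet_adj] at hcon ⊢
    obtain ⟨he, hne⟩ := hcon
    rw [Set.mem_singleton_iff] at he
    refine ⟨?_, fun e => hne (Subtype.ext e)⟩
    rw [Set.mem_singleton_iff]
    have := congrArg (Sym2.map Subtype.val) he
    simpa [Sym2.map_pair_eq] using this

private lemma spanningCoe_isAcyclic {G : SimpleGraph V} {T : G.Subgraph}
    (h : T.coe.IsAcyclic) : T.spanningCoe.IsAcyclic := by
  rw [isAcyclic_iff_forall_adj_isBridge]
  intro x y hxy
  have hx : x ∈ T.verts := T.edge_vert hxy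
  have hy : y ∈ T.verts := T.edge_vert hxy.symm
  rw [isBridge_iff]
  refine fun hr => ?_
  have hb := isAcyclic_iff_forall_adj_isBridge.mp h
      (show T.coe.Adj ⟨x, hx⟩ ⟨y, hy⟩ from hxy)
  rw [isBridge_iff] at hb
  obtain ⟨p⟩ := hr
  exact hb (coe_reach_of_spanning T hx hy p hx hy)

end Aux

theorem stmt11 {V : Type*} [Fintype V] (G : SimpleGraph V) (hG : G.Connected) (k : ℕ)
    (T : G.Subgraph) (hT : T.coe.IsTree)
    (hk : (sbranch T).ncard = k)
    (hmax : ∀ T' : G.Subgraph, T'.coe.IsTree → (sbranch T').ncard = k →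
      T'.verts.ncard ≤ T.verts.ncard)
    (hns : T.verts ≠ Set.univ) :
    ∀ v ∉ T.verts, ∀ u : V, G.Adj v u → (u ∈ sleaf T ∨ u ∉ T.verts) := by
  classical
  intro v hv u hadj
  by_contra hcon
  push_neg at hcon
  obtain ⟨huleaf, humem⟩ := hcon
  have hvu : v ≠ u := hadj.ne
  have hvIso : ∀ x, ¬ T.Adj v x := fun x h => hv (T.edge_vert h)
  set T' : G.Subgraph := T ⊔ G.subgraphOfAdj hadj with hT'def
  have hT'adj : ∀ a b, T'.Adj a b ↔ T.Adj a b ∨ (a = u ∧ b = v) ∨ (a = v ∧ b = u) := by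
    intro a b
    rw [hT'def, Subgraph.sup_adj, subgraphOfAdj_adj, Sym2.eq_iff]
    constructor
    · rintro (h | ⟨h1, h2⟩ | ⟨h1, h2⟩)
      · exact Or.inl h
      · exact Or.inr (Or.inr ⟨h1.symm, h2.symm⟩)
      · exact Or.inr (Or.inl ⟨h2.symm, h1.symm⟩)
    · rintro (h | ⟨h1, h2⟩ | ⟨h1, h2⟩)
      · exact Or.inl h
      · exact Or.inr (Or.inr ⟨h2.symm, h1.symm⟩)
      · exact Or.inr (Or.inl ⟨h1.symm, h2.symm⟩)
  have hT'verts : T'.verts = insert v T.verts := by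
    rw [hT'def, Subgraph.verts_sup, subgraphOfAdj_verts]
    ext x
    simp only [Set.mem_union, Set.mem_insert_iff, Set.mem_singleton_iff]
    constructor
    · rintro (h | h | rfl)
      · exact Or.inr h
      · exact Or.inl h
      · exact Or.inr humem
    · rintro (rfl | h)
      · exact Or.inr (Or.inl rfl)
      · exact Or.inl h
  -- T' is a tree
  have hT'conn : T'.Connected := by
    refine Subgraph.connected_sup (Subgraph.preconnected_iff.mpr hT.isConnected.preconnected) (Subgraph.subgraphOfAdj_connected hadj).preconnected ?_
    exact ⟨u, by rw [Subgraph.verts_inf]; exact ⟨humem, by simp⟩⟩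
  have hT'span : T'.spanningCoe.IsAcyclic := by
    refine pendant_isAcyclic (u := u) (v := v) (spanningCoe_isAcyclic hT.IsAcyclic)
      (fun e => hvu e.symm) (fun x h => hvIso x h) ?_
    intro a b
    rw [Subgraph.spanningCoe_adj]
    exact hT'adj a b
  have hT'acyc : T'.coe.IsAcyclic := by
    intro a c hc
    let f : T'.coe →g T'.spanningCoe := ⟨Subtype.val, fun h => h⟩
    exact hT'span (c.map f) (hc.map (f := f) (fun _ _ h => Subtype.val_injective h))
  have hT'tree : T'.coe.IsTree := ⟨hT'conn.coe, hT'acyc⟩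
  -- neighbor sets in T'
  have nv : T'.neighborSet v = {u} := by
    ext x
    constructor
    · intro h
      rcases (hT'adj v x).mp h with h' | ⟨h1, h2⟩ | ⟨h1, h2⟩
      · exact absurd h' (hvIso x)
      · exact absurd h1 hvu
      · exact h2
    · intro h
      exact (hT'adj v x).mpr (Or.inr (Or.inr ⟨rfl, h⟩))
  have nu : T'.neighborSet u = insert v (T.neighborSet u) := by
    ext x
    constructor
    · intro h
      rcases (hT'adj u x).mp h with h' | ⟨h1, h2⟩ | ⟨h1, h2⟩
      · exact Set.mem_insert_of_mem _ h'
      · exact Set.mem_insert_iff.mpr (Or.inl h2)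
      · exact absurd h1 (fun e => hvu e.symm)
    · intro h
      rcases Set.mem_insert_iff.mp h with rfl | h'
      · exact (hT'adj u x).mpr (Or.inr (Or.inl ⟨rfl, rfl⟩))
      · exact (hT'adj u x).mpr (Or.inl h')
  have nw : ∀ w, w ≠ u → w ≠ v → T'.neighborSet w = T.neighborSet w := by
    intro w hwu hwv
    ext x
    constructor
    · intro h
      rcases (hT'adj w x).mp h with h' | ⟨h1, h2⟩ | ⟨h1, h2⟩
      · exact h'
      · exact absurd h1 hwu
      · exact absurd h1 hwv
    · exact fun h => (hT'adj w x).mpr (Or.inl h)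
  -- degrees
  have dv : sdeg T' v = 1 := by unfold sdeg; rw [nv, Set.ncard_singleton]
  have du : sdeg T' u = sdeg T u + 1 := by
    unfold sdeg
    rw [nu, Set.ncard_insert_of_notMem
      (fun h => hv (T.edge_vert (T.adj_symm ((T.mem_neighborSet u v).mp h))))]
  have dw : ∀ w, w ≠ u → w ≠ v → sdeg T' w = sdeg T w := by
    intro w hwu hwv; unfold sdeg; rw [nw w hwu hwv]
  -- leaves
  have lv : v ∈ sleaf T' := ⟨by rw [hT'verts]; exact Set.mem_insert _ _, dv⟩
  have lu : u ∈ sleaf T' ↔ sdeg T u = 0 := by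
    constructor
    · intro h
      have h2 := h.2
      rw [du] at h2
      omega
    · intro h
      refine ⟨by rw [hT'verts]; exact Set.mem_insert_of_mem _ humem, ?_⟩
      rw [du, h]
  have lw : ∀ w, w ≠ u → w ≠ v → (w ∈ sleaf T' ↔ w ∈ sleaf T) := by
    intro w hwu hwv
    unfold sleaf
    simp only [Set.mem_setOf_eq, hT'verts, Set.mem_insert_iff, dw w hwu hwv]
    constructor
    · rintro ⟨(rfl | h), hd⟩
      · exact absurd rfl hwv
      · exact ⟨h, hd⟩
    · exact fun ⟨h, hd⟩ => ⟨Or.inr h, hd⟩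
  -- the branch sets agree
  have hbranch : sbranch T' = sbranch T := by
    by_cases hdu0 : sdeg T u = 0
    · -- degenerate case : T is a single vertex
      have hne : T.neighborSet u = ∅ := by
        unfold sdeg at hdu0
        exact (Set.ncard_eq_zero (Set.toFinite _)).mp hdu0
      have hnoT : ∀ a b, ¬ T.Adj a b := by
        intro a b hab
        have ha : a ∈ T.verts := T.edge_vert hab
        by_cases hau : a = u
        · subst hau
          have hb : b ∈ T.neighborSet a := hab
          rw [hne] at hb
          exact hb
        · obtain ⟨q⟩ := (hT.isConnected).preconnected ⟨u, humem⟩ ⟨a, ha⟩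
          have hq : ¬ q.Nil :=
            Walk.not_nil_of_ne (fun e => hau (congrArg Subtype.val e).symm)
          have hadj1 := q.adj_snd hq
          have hx : (q.getVert 1 : T.verts).1 ∈ T.neighborSet u := hadj1
          rw [hne] at hx
          exact hx
      have luT' : u ∈ sleaf T' := lu.mpr hdu0
      have hstemT' : ∀ w, sstemDeg T' w = 0 := by
        intro w
        have hset : {x | T'.Adj w x ∧ w ∉ sleaf T' ∧ x ∉ sleaf T'} = (∅ : Set V) := by
          ext x
          simp only [Set.mem_setOf_eq, Set.mem_empty_iff_false, iff_false, not_and]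
          intro h hwl
          intro hxl
          rcases (hT'adj w x).mp h with h' | ⟨h1, h2⟩ | ⟨h1, h2⟩
          · exact hnoT w x h'
          · exact hxl (h2 ▸ lv)
          · exact hwl (h1 ▸ lv)
        unfold sstemDeg
        rw [hset, Set.ncard_empty]
      have hstemT : ∀ w, sstemDeg T w = 0 := by
        intro w
        have hset : {x | T.Adj w x ∧ w ∉ sleaf T ∧ x ∉ sleaf T} = (∅ : Set V) := by
          ext x
          simp only [Set.mem_setOf_eq, Set.mem_empty_iff_false, iff_false, not_and]
          intro h
          exact absurd h (hnoT w x)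
        unfold sstemDeg
        rw [hset, Set.ncard_empty]
      ext w
      unfold sbranch
      simp [hstemT, hstemT']
    · -- main case : u is an interior vertex of T
      have huleaf' : u ∉ sleaf T' := fun h => hdu0 (lu.mp h)
      have leafeq : sleaf T' = insert v (sleaf T) := by
        ext w
        by_cases hwv : w = v
        · subst hwv
          simp [lv]
        · by_cases hwu : w = u
          · subst hwu
            constructor
            · intro h; exact absurd h huleaf'
            · intro h
              rcases Set.mem_insert_iff.mp h with h | h
              · exact absurd h hwv
              · exact absurd h huleaf
          · rw [lw w hwu hwv]
            simp [Set.mem_insert_iff, hwv]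
      have hstem : ∀ w, sstemDeg T' w = sstemDeg T w := by
        intro w
        unfold sstemDeg
        congr 1
        ext x
        simp only [Set.mem_setOf_eq, leafeq, Set.mem_insert_iff, not_or]
        constructor
        · rintro ⟨hadj', ⟨hwv, hwl⟩, ⟨hxv, hxl⟩⟩
          rcases (hT'adj w x).mp hadj' with h | ⟨h1, h2⟩ | ⟨h1, h2⟩
          · exact ⟨h, hwl, hxl⟩
          · exact absurd h2 hxv
          · exact absurd h1 hwv
        · rintro ⟨h, hwl, hxl⟩
          have hwv : w ≠ v := fun e => hvIso x (e ▸ h)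
          have hxv : x ≠ v := fun e => hvIso w (e ▸ h.symm)
          exact ⟨(hT'adj w x).mpr (Or.inl h), ⟨hwv, hwl⟩, ⟨hxv, hxl⟩⟩
      ext w
      unfold sbranch
      simp [hstem]
  -- contradiction with maximality
  have hle := hmax T' hT'tree (by rw [hbranch, hk])
  rw [hT'verts, Set.ncard_insert_of_notMem hv] at hle
  omega
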